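/- Let I = (f_1,...,f_s) be an ideal of a commutative ring R, n > 0, and suppose x ∈ I^{n+m} : (f_1^m,...,f_s^m) for some m ≥ 0. Then x belongs to the Ratliff–Rush closure Ĩ^n = ∪_{k≥1} (I^{n+k} : I^k). -/

import Mathlib

open Finset in
lemma prod_mem_pow_card' {R : Type*} [CommRing R] (I : Ideal R) {ι : Type*} [DecidableEq ι]
    (T : Finset ι) (g : ι → R) (h : ∀ j ∈ T, g j ∈ I) :
    (∏ j ∈ T, g j) ∈ I ^ T.card := by
  induction T using Finset.induction_on with
  | empty => simpa using Ideal.one_mem _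
  | @insert a T ha ih =>
    rw [Finset.prod_insert ha, Finset.card_insert_of_notMem ha, pow_succ, mul_comm]
    exact Ideal.mul_mem_mul (h a (Finset.mem_insert_self a T))
      (ih fun j hj => h j (Finset.mem_insert_of_mem hj))

open Pointwise in
/-- If `I = (f_1,…,f_s)`, `n > 0` and `x ∈ I^{n+m} : (f_1^m,…,f_s^m)` for some `m ≥ 0`,
then `x` lies in the Ratliff–Rush closure `Ĩ^n = ∪_{k≥1} (I^{n+k} : I^k)`. -/
theorem stmt_18 {R : Type*} [CommRing R] {s : ℕ} (f : Fin s → R)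
    (n m : ℕ) (hn : 0 < n) (x : R)
    (h : x ∈ Submodule.colon ((Ideal.span (Set.range f)) ^ (n + m))
      (Ideal.span (Set.range fun i => f i ^ m))) :
    ∃ k : ℕ, x ∈ Submodule.colon ((Ideal.span (Set.range f)) ^ (n + (k + 1)))
      (((Ideal.span (Set.range f)) ^ (k + 1) : Ideal R) : Set R) := by
  classical
  set I := Ideal.span (Set.range f) with hI
  rcases Nat.eq_zero_or_pos s with hs | hs
  · -- s = 0 : I = ⊥
    subst hs
    have : I = ⊥ := by
      rw [hI, Set.range_eq_empty, Ideal.span_empty]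
    refine ⟨0, Submodule.mem_colon.mpr fun p hp => ?_⟩
    rw [this] at hp ⊢
    simp only [pow_succ, pow_zero, one_mul, Ideal.bot_mul, SetLike.mem_coe, Submodule.mem_bot] at hp
    simp [hp]
  · -- s > 0
    set K := s * m + m + 1 with hK
    refine ⟨s * m + m, Submodule.mem_colon.mpr fun p hp => ?_⟩
    have hpK : p ∈ I ^ K := hp
    rw [hI, Ideal.span, Submodule.span_pow] at hpK
    -- reduce to generators of span
    have key : ∀ w ∈ (Set.range f) ^ K, x * w ∈ I ^ (n + K) := by
      intro w hw
      rw [Set.mem_pow] at hw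
      obtain ⟨g, hg⟩ := hw
      rw [List.prod_ofFn] at hg
      -- g : Fin K → ↥(Set.range f); choose indices
      choose c hc using fun i => (g i).2
      -- pigeonhole: some fiber of c has more than m elements
      obtain ⟨i, hi⟩ : ∃ i : Fin s, m < (Finset.univ.filter fun j => c j = i).card := by
        apply Fintype.exists_lt_card_fiber_of_mul_lt_card
        simp [hK, Fintype.card_fin]
      obtain ⟨T, hTsub, hTcard⟩ := Finset.exists_subset_card_eq hi.le
      have hsplit : w = (∏ j ∈ T, f (c j)) * ∏ j ∈ Tᶜ, f (c j) := by
        rw [Finset.prod_mul_prod_compl]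
        rw [← hg]; congr 1; ext j; exact (hc j).symm
      have hT : (∏ j ∈ T, f (c j)) = f i ^ m := by
        rw [Finset.prod_congr rfl fun j hj => by
          rw [(Finset.mem_filter.mp (hTsub hj)).2], Finset.prod_const, hTcard]
      have h1 : x * f i ^ m ∈ I ^ (n + m) := by
        have := Submodule.mem_colon.mp h (f i ^ m) (Ideal.subset_span ⟨i, rfl⟩)
        simpa [smul_eq_mul] using this
      have h2 : (∏ j ∈ Tᶜ, f (c j)) ∈ I ^ Tᶜ.card :=
        prod_mem_pow_card' I Tᶜ _ fun j _ => Ideal.subset_span ⟨c j, rfl⟩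
      have hcard : Tᶜ.card = K - m := by
        rw [Finset.card_compl, hTcard, Fintype.card_fin]
      rw [hcard] at h2
      have : x * w ∈ I ^ (n + m) * I ^ (K - m) := by
        rw [hsplit, hT, ← mul_assoc]
        exact Ideal.mul_mem_mul h1 h2
      rwa [← pow_add, show n + m + (K - m) = n + K by omega] at this
    have hle : Submodule.span R ((Set.range f) ^ K) ≤
        Submodule.comap (LinearMap.lsmul R R x) (I ^ (n + K)) := by
      rw [Submodule.span_le]
      intro w hw
      simpa using key w hw
    have := hle hpK
    simpa [smul_eq_mul] using this
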